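/- arXiv:2202.05841 — 3 statements merged into one kernel-verified Lean document; each statement's English description precedes it below -/
import Mathlib

section
/- Let f : [0, ∞) → ℝ be continuous, α > 0, and suppose that for every t > 0 there exists an upper-differential p_t of f at t (i.e., limsup_{s→t} (f(s) - f(t) - p_t(s-t))/|s-t| ≤ 0) with p_t ≤ -α f(t), and f ≥ 0. Then f(t) ≤ f(0) · exp(-α t) for all t ≥ 0. -/
open Filter Set

/-- Grönwall-type lemma via upper-differentials: if `f : [0, ∞) → ℝ` is continuous,
nonnegative, and at every `t > 0` admits an upper-differential `p ≤ -α f t`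
(where `p` is an upper-differential of `f` at `t` if
`limsup_{s → t} (f s - f t - p (s - t)) / |s - t| ≤ 0`, unfolded below),
then `f t ≤ f 0 * exp (-α t)` for all `t ≥ 0`. -/
theorem gronwall_upper_differential (f : ℝ → ℝ) (α : ℝ) (hα : 0 < α)
    (hcont : ContinuousOn f (Ici 0)) (hnonneg : ∀ t ∈ Ici (0 : ℝ), 0 ≤ f t)
    (hdiff : ∀ t > (0 : ℝ), ∃ p : ℝ, p ≤ -α * f t ∧
      ∀ ε > (0 : ℝ), ∀ᶠ s in nhdsWithin t (Ici 0 \ {t}),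
        f s - f t - p * (s - t) ≤ ε * |s - t|) :
    ∀ t ≥ (0 : ℝ), f t ≤ f 0 * Real.exp (-α * t) := by
  intro t ht
  rcases eq_or_lt_of_le ht with rfl | ht
  · simp
  -- key estimate on [a, t] for 0 < a < t and 0 < ε < α
  have key : ∀ ε ∈ Ioo (0:ℝ) α, ∀ a ∈ Ioo (0:ℝ) t,
      f t ≤ (f a + ε) * Real.exp (-(α - ε) * (t - a)) := by
    intro ε hε a ha
    set c : ℝ := -(α - ε) with hc
    have hcneg : c < 0 := by simp [hc]; linarith [hε.2]
    set B : ℝ → ℝ := fun x => (f a + ε) * Real.exp (c * (x - a)) with hB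
    have hfa : 0 ≤ f a := hnonneg a (le_of_lt ha.1)
    have hBpos : ∀ x, 0 < B x := fun x =>
      mul_pos (by linarith [hε.1]) (Real.exp_pos _)
    have hmain : ∀ x ∈ Icc a t, f x ≤ B x := by
      refine image_le_of_liminf_slope_right_lt_deriv_boundary'
        (f' := fun x => -α * f x) (B' := fun x => c * B x) ?_ ?_ ?_ ?_ ?_ ?_
      · exact hcont.mono (fun x hx => le_trans ha.1.le hx.1)
      · intro x hx r hr
        obtain ⟨p, hp, hub⟩ := hdiff x (lt_of_lt_of_le ha.1 hx.1)
        have hpr : p < r := lt_of_le_of_lt hp hr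
        have hδ : (0:ℝ) < (r - p) / 2 := by linarith
        have hev := hub _ hδ
        have hsub : Ioi x ⊆ Ici (0:ℝ) \ {x} := by
          intro z hz
          exact ⟨le_of_lt (lt_trans (lt_of_lt_of_le ha.1 hx.1) hz), ne_of_gt hz⟩
        have hev' : ∀ᶠ z in nhdsWithin x (Ioi x),
            f z - f x - p * (z - x) ≤ (r - p) / 2 * |z - x| :=
          (nhdsWithin_mono x hsub) hev
        refine (hev'.and self_mem_nhdsWithin).mono (fun z hz => ?_) |>.frequently
        obtain ⟨hz1, hz2⟩ := hz
        have hzx : (0:ℝ) < z - x := sub_pos.2 hz2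
        rw [slope_def_field, div_lt_iff₀ hzx]
        have : |z - x| = z - x := abs_of_pos hzx
        rw [this] at hz1
        nlinarith
      · simp only [hB, sub_self, mul_zero, Real.exp_zero, mul_one]
        linarith [hε.1]
      · fun_prop
      · intro x hx
        have h1 : HasDerivAt (fun y => c * (y - a)) c x := by
          simpa using ((hasDerivAt_id x).sub_const a).const_mul c
        have h2 := (Real.hasDerivAt_exp (c * (x - a))).comp x h1
        have h3 := h2.const_mul (f a + ε)
        have h4 : HasDerivAt B (c * B x) x := by
          refine h3.congr_deriv ?_
          simp only [hB]; ring
        exact h4.hasDerivWithinAt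
      · intro x hx hfx
        have hBx : 0 < B x := hBpos x
        rw [hfx, hc]
        nlinarith [hε.1]
    simpa [hB, hc] using hmain t ⟨ha.2.le, le_refl t⟩
  -- let a → 0⁺
  have step1 : ∀ ε ∈ Ioo (0:ℝ) α, f t ≤ (f 0 + ε) * Real.exp (-(α - ε) * t) := by
    intro ε hε
    have hf0 : Filter.Tendsto f (nhdsWithin 0 (Ioi 0)) (nhds (f 0)) :=
      (hcont 0 self_mem_Ici).tendsto.mono_left
        (nhdsWithin_mono 0 Ioi_subset_Ici_self)
    have htend : Filter.Tendsto (fun a => (f a + ε) * Real.exp (-(α - ε) * (t - a)))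
        (nhdsWithin 0 (Ioi 0)) (nhds ((f 0 + ε) * Real.exp (-(α - ε) * t))) := by
      have h2 : Filter.Tendsto (fun a : ℝ => Real.exp (-(α - ε) * (t - a)))
          (nhdsWithin 0 (Ioi 0)) (nhds (Real.exp (-(α - ε) * t))) := by
        have : Continuous (fun a : ℝ => Real.exp (-(α - ε) * (t - a))) := by fun_prop
        simpa using (this.tendsto 0).mono_left nhdsWithin_le_nhds
      exact (hf0.add_const ε).mul h2
    refine ge_of_tendsto htend ?_
    filter_upwards [Ioo_mem_nhdsGT_of_mem ⟨le_refl (0:ℝ), ht⟩] with a ha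
    exact key ε hε a ha
  -- let ε → 0⁺
  have htend2 : Filter.Tendsto (fun ε : ℝ => (f 0 + ε) * Real.exp (-(α - ε) * t))
      (nhdsWithin 0 (Ioi 0)) (nhds (f 0 * Real.exp (-α * t))) := by
    have : Continuous (fun ε : ℝ => (f 0 + ε) * Real.exp (-(α - ε) * t)) := by fun_prop
    simpa using (this.tendsto 0).mono_left nhdsWithin_le_nhds
  refine ge_of_tendsto htend2 ?_
  filter_upwards [Ioo_mem_nhdsGT_of_mem ⟨le_refl (0:ℝ), hα⟩] with ε hε
  exact step1 ε hε
end

section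
/- Let μ be a Borel probability measure on a metric space (X, d) with ∫ d(x, x₀)^p μ(dx) < ∞ for some p ≥ 1 and x₀ ∈ X. Then there is a constant L > 0 such that for all Borel measurable f, g : X → ℝ with f, g ≥ 0, ∫ f dμ = ∫ g dμ = 1, and f, g essentially bounded, the Wasserstein-p distance satisfies W_p(f·μ, g·μ) ≤ L · ‖f - g‖_{L^∞(μ)}^{1/p}. -/
open MeasureTheory
open scoped ENNReal

/-- The Wasserstein distance of order `p` between two measures on a metric space,
defined via couplings: `W_p(ν₁, ν₂) = inf_π (∫ d(x,y)^p dπ)^{1/p}` where the infimum runs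
over all couplings `π` of `ν₁` and `ν₂`. -/
noncomputable def wassersteinDist {X : Type*} [MetricSpace X] [MeasurableSpace X]
    (p : ℝ) (ν₁ ν₂ : Measure X) : ℝ≥0∞ :=
  ⨅ (π : Measure (X × X)) (_ : π.map Prod.fst = ν₁) (_ : π.map Prod.snd = ν₂),
    (∫⁻ z, ENNReal.ofReal (dist z.1 z.2 ^ p) ∂π) ^ (1 / p)

/-- Elementary inequality: `d ^ p ≤ 2 ^ p * (a ^ p + b ^ p)` when `d ≤ a + b`. -/
lemma aux_rpow_ineq {a b d p : ℝ} (ha : 0 ≤ a) (hb : 0 ≤ b) (hd : 0 ≤ d)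
    (hdab : d ≤ a + b) (hp : 0 ≤ p) : d ^ p ≤ 2 ^ p * (a ^ p + b ^ p) := by
  have h1 : d ^ p ≤ (a + b) ^ p := Real.rpow_le_rpow hd hdab hp
  have h2 : (a + b : ℝ) ≤ 2 * max a b := by
    rcases le_total a b with h | h
    · simp [two_mul]; nlinarith [le_max_right a b]
    · simp [two_mul]; nlinarith [le_max_left a b]
  have h3 : (a + b) ^ p ≤ (2 * max a b) ^ p :=
    Real.rpow_le_rpow (by positivity) h2 hp
  have h4 : (2 * max a b) ^ p = 2 ^ p * (max a b) ^ p :=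
    Real.mul_rpow (by norm_num) (le_max_of_le_left ha)
  have h5 : (max a b) ^ p ≤ a ^ p + b ^ p := by
    rcases max_cases a b with ⟨hm, _⟩ | ⟨hm, _⟩ <;> rw [hm]
    · nlinarith [Real.rpow_nonneg hb p]
    · nlinarith [Real.rpow_nonneg ha p]
  calc d ^ p ≤ (2 * max a b) ^ p := h1.trans h3
    _ = 2 ^ p * (max a b) ^ p := h4
    _ ≤ 2 ^ p * (a ^ p + b ^ p) := by
        have : (0:ℝ) ≤ 2 ^ p := Real.rpow_nonneg (by norm_num) p
        nlinarith

lemma aux_invmul_smul {X : Type*} [MeasurableSpace X] (ν : Measure X)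
    (hne : ν Set.univ ≠ ⊤) : ((ν Set.univ)⁻¹ * ν Set.univ) • ν = ν := by
  by_cases h0 : ν Set.univ = 0
  · have : ν = 0 := Measure.measure_univ_eq_zero.mp h0
    simp [this]
  · rw [ENNReal.inv_mul_cancel h0 hne, one_smul]

set_option maxHeartbeats 2000000 in
/-- If `μ` has a finite `p`-th moment about some point `x₀`, then on probability densities
(with respect to `μ`) bounded in `L^∞(μ)`, the map `f ↦ f·μ` is `1/p`-Hölder from
`L^∞(μ)` into Wasserstein-`p` space: `W_p(f·μ, g·μ) ≤ L ‖f - g‖_{L^∞(μ)}^{1/p}`. -/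
theorem wasserstein_le_Linfty_pow {X : Type*} [MetricSpace X] [MeasurableSpace X] [BorelSpace X]
    (μ : Measure X) [IsProbabilityMeasure μ] (p : ℝ) (hp : 1 ≤ p) (x₀ : X)
    (hmoment : ∫⁻ x, ENNReal.ofReal (dist x x₀ ^ p) ∂μ < ⊤) :
    ∃ L > (0 : ℝ), ∀ f g : X → ℝ, Measurable f → Measurable g →
      (∀ x, 0 ≤ f x) → (∀ x, 0 ≤ g x) →
      (∫ x, f x ∂μ) = 1 → (∫ x, g x ∂μ) = 1 →
      eLpNorm f ⊤ μ < ⊤ → eLpNorm g ⊤ μ < ⊤ →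
      wassersteinDist p (μ.withDensity fun x => ENNReal.ofReal (f x))
          (μ.withDensity fun x => ENNReal.ofReal (g x))
        ≤ ENNReal.ofReal L * eLpNorm (f - g) ⊤ μ ^ (1 / p) := by
  have hp0 : (0:ℝ) < p := lt_of_lt_of_le one_pos hp
  set M : ℝ≥0∞ := ∫⁻ x, ENNReal.ofReal (dist x x₀ ^ p) ∂μ with hMdef
  set K : ℝ≥0∞ := ENNReal.ofReal (2 ^ p) with hKdef
  set C : ℝ≥0∞ := (K * 2 * M) ^ (1/p) with hCdef
  have hCne : C ≠ ⊤ := by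
    refine (ENNReal.rpow_lt_top_of_nonneg (by positivity) ?_).ne
    exact (ENNReal.mul_lt_top (ENNReal.mul_lt_top ENNReal.ofReal_lt_top (by norm_num)) hmoment).ne
  refine ⟨C.toReal + 1, by positivity, ?_⟩
  intro f g hf hg hf0 hg0 hfint hgint hfb hgb
  set ε : ℝ≥0∞ := eLpNorm (f - g) ⊤ μ with hεdef
  -- measurable densities
  have hminm : Measurable fun x => min (f x) (g x) := hf.min hg
  set h : X → ℝ≥0∞ := fun x => ENNReal.ofReal (min (f x) (g x)) with hhdef
  set F : X → ℝ≥0∞ := fun x => ENNReal.ofReal (f x - min (f x) (g x)) with hFdef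
  set G : X → ℝ≥0∞ := fun x => ENNReal.ofReal (g x - min (f x) (g x)) with hGdef
  have hhm : Measurable h := hminm.ennreal_ofReal
  have hFm : Measurable F := (hf.sub hminm).ennreal_ofReal
  have hGm : Measurable G := (hg.sub hminm).ennreal_ofReal
  have hmin0 : ∀ x, 0 ≤ min (f x) (g x) := fun x => le_min (hf0 x) (hg0 x)
  -- decomposition
  have hsplitf : (fun x => ENNReal.ofReal (f x)) = h + F := by
    funext x
    show ENNReal.ofReal (f x) = h x + F x
    rw [hhdef, hFdef, ← ENNReal.ofReal_add (hmin0 x) (sub_nonneg.2 (min_le_left _ _))]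
    ring_nf
  have hsplitg : (fun x => ENNReal.ofReal (g x)) = h + G := by
    funext x
    show ENNReal.ofReal (g x) = h x + G x
    rw [hhdef, hGdef, ← ENNReal.ofReal_add (hmin0 x) (sub_nonneg.2 (min_le_right _ _))]
    ring_nf
  -- integrability
  have hfint' : Integrable f μ := by
    have : MemLp f ⊤ μ := ⟨hf.aestronglyMeasurable, hfb⟩
    exact memLp_one_iff_integrable.mp (this.mono_exponent le_top)
  have hgint' : Integrable g μ := by
    have : MemLp g ⊤ μ := ⟨hg.aestronglyMeasurable, hgb⟩
    exact memLp_one_iff_integrable.mp (this.mono_exponent le_top)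
  have hminint : Integrable (fun x => min (f x) (g x)) μ := by
    refine hfint'.mono hminm.aestronglyMeasurable (Filter.Eventually.of_forall fun x => ?_)
    rw [Real.norm_of_nonneg (hmin0 x), Real.norm_of_nonneg (hf0 x)]
    exact min_le_left _ _
  have hfsub : Integrable (fun x => f x - min (f x) (g x)) μ := hfint'.sub hminint
  have hgsub : Integrable (fun x => g x - min (f x) (g x)) μ := hgint'.sub hminint
  -- equal masses
  have hmF : ∫⁻ x, F x ∂μ = ENNReal.ofReal (1 - ∫ x, min (f x) (g x) ∂μ) := by
    rw [hFdef, ← ofReal_integral_eq_lintegral_ofReal hfsub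
      (Filter.Eventually.of_forall fun x => sub_nonneg.2 (min_le_left _ _))]
    rw [integral_sub hfint' hminint, hfint]
  have hmG : ∫⁻ x, G x ∂μ = ENNReal.ofReal (1 - ∫ x, min (f x) (g x) ∂μ) := by
    rw [hGdef, ← ofReal_integral_eq_lintegral_ofReal hgsub
      (Filter.Eventually.of_forall fun x => sub_nonneg.2 (min_le_right _ _))]
    rw [integral_sub hgint' hminint, hgint]
  set m : ℝ≥0∞ := ∫⁻ x, F x ∂μ with hmdef
  have hmGm : ∫⁻ x, G x ∂μ = m := by rw [hmG, ← hmF]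
  have hm_le : m ≤ 1 := by
    rw [hmF]
    have h0 : (0:ℝ) ≤ ∫ x, min (f x) (g x) ∂μ := integral_nonneg fun x => hmin0 x
    calc ENNReal.ofReal (1 - ∫ x, min (f x) (g x) ∂μ) ≤ ENNReal.ofReal 1 :=
          ENNReal.ofReal_le_ofReal (by linarith)
      _ = 1 := ENNReal.ofReal_one
  have hm_ne_top : m ≠ ⊤ := (lt_of_le_of_lt hm_le ENNReal.one_lt_top).ne
  -- the measures
  set νh : Measure X := μ.withDensity h with hνh
  set νF : Measure X := μ.withDensity F with hνF
  set νG : Measure X := μ.withDensity G with hνG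
  have hνFu : νF Set.univ = m := by
    rw [hνF, withDensity_apply _ MeasurableSet.univ, setLIntegral_univ]
  have hνGu : νG Set.univ = m := by
    rw [hνG, withDensity_apply _ MeasurableSet.univ, setLIntegral_univ, hmGm]
  haveI : IsFiniteMeasure νF := ⟨by rw [hνFu]; exact lt_of_le_of_lt hm_le ENNReal.one_lt_top⟩
  haveI : IsFiniteMeasure νG := ⟨by rw [hνGu]; exact lt_of_le_of_lt hm_le ENNReal.one_lt_top⟩
  have hdiagm : Measurable fun x : X => (x, x) := measurable_id.prodMk measurable_id
  set π : Measure (X × X) :=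
    Measure.map (fun x => (x, x)) νh + m⁻¹ • (νF.prod νG) with hπdef
  -- marginals
  have hfst : π.map Prod.fst = μ.withDensity fun x => ENNReal.ofReal (f x) := by
    rw [hπdef, Measure.map_add _ _ measurable_fst, Measure.map_smul,
      Measure.map_map measurable_fst hdiagm, Measure.map_fst_prod, hνGu, smul_smul]
    have hid : (Prod.fst ∘ fun x : X => (x, x)) = id := rfl
    rw [hid, Measure.map_id, ← hνFu, aux_invmul_smul νF (by rw [hνFu]; exact hm_ne_top)]
    rw [hsplitf, withDensity_add_left hhm]
  have hsnd : π.map Prod.snd = μ.withDensity fun x => ENNReal.ofReal (g x) := by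
    rw [hπdef, Measure.map_add _ _ measurable_snd, Measure.map_smul,
      Measure.map_map measurable_snd hdiagm, Measure.map_snd_prod, hνFu, smul_smul]
    have hid : (Prod.snd ∘ fun x : X => (x, x)) = id := rfl
    rw [hid, Measure.map_id, ← hνGu, aux_invmul_smul νG (by rw [hνGu]; exact hm_ne_top)]
    rw [hsplitg, withDensity_add_left hhm]
  -- cost function
  set c : X × X → ℝ≥0∞ := fun z => ENNReal.ofReal (dist z.1 z.2 ^ p) with hcdef
  set A : X → ℝ≥0∞ := fun x => ENNReal.ofReal (dist x x₀ ^ p) with hAdef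
  have hAm : Measurable A :=
    (((continuous_id.dist continuous_const).rpow_const
      (fun _ => Or.inr hp0.le)).measurable).ennreal_ofReal
  set B : X × X → ℝ≥0∞ := fun z => K * (A z.1 + A z.2) with hBdef
  have hBm : Measurable B :=
    ((hAm.comp measurable_fst).add (hAm.comp measurable_snd)).const_mul K
  -- a.e. bounds on the remainder densities
  have hFε : ∀ᵐ x ∂μ, F x ≤ ε := by
    filter_upwards [enorm_ae_le_eLpNormEssSup (f - g) μ] with x hx
    have h1 : f x - min (f x) (g x) ≤ |f x - g x| := by
      rcases le_total (f x) (g x) with hle | hle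
      · rw [min_eq_left hle]; simp [abs_nonneg]
      · rw [min_eq_right hle]; exact le_abs_self _
    calc F x ≤ ENNReal.ofReal |f x - g x| := ENNReal.ofReal_le_ofReal h1
      _ = ‖(f - g) x‖ₑ := by rw [Real.enorm_eq_ofReal_abs]; rfl
      _ ≤ eLpNormEssSup (f - g) μ := hx
      _ = ε := by rw [hεdef, eLpNorm_exponent_top]
  have hGε : ∀ᵐ x ∂μ, G x ≤ ε := by
    filter_upwards [enorm_ae_le_eLpNormEssSup (f - g) μ] with x hx
    have h1 : g x - min (f x) (g x) ≤ |f x - g x| := by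
      rcases le_total (f x) (g x) with hle | hle
      · rw [min_eq_left hle, abs_sub_comm]; exact le_abs_self _
      · rw [min_eq_right hle]; simp [abs_nonneg]
    calc G x ≤ ENNReal.ofReal |f x - g x| := ENNReal.ofReal_le_ofReal h1
      _ = ‖(f - g) x‖ₑ := by rw [Real.enorm_eq_ofReal_abs]; rfl
      _ ≤ eLpNormEssSup (f - g) μ := hx
      _ = ε := by rw [hεdef, eLpNorm_exponent_top]
  -- moment integrals against the remainders
  have hIF : ∫⁻ x, A x ∂νF ≤ ε * M := by
    rw [hνF, lintegral_withDensity_eq_lintegral_mul μ hFm hAm]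
    calc ∫⁻ x, (F * A) x ∂μ ≤ ∫⁻ x, ε * A x ∂μ := by
          refine lintegral_mono_ae ?_
          filter_upwards [hFε] with x hx
          exact mul_le_mul_left hx _
      _ = ε * M := by rw [lintegral_const_mul _ hAm]
  have hIG : ∫⁻ x, A x ∂νG ≤ ε * M := by
    rw [hνG, lintegral_withDensity_eq_lintegral_mul μ hGm hAm]
    calc ∫⁻ x, (G * A) x ∂μ ≤ ∫⁻ x, ε * A x ∂μ := by
          refine lintegral_mono_ae ?_
          filter_upwards [hGε] with x hx
          exact mul_le_mul_left hx _
      _ = ε * M := by rw [lintegral_const_mul _ hAm]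
  -- pointwise cost bound
  have hkey : ∀ x y : X, c (x, y) ≤ B (x, y) := by
    intro x y
    show c (x, y) ≤ K * (A x + A y)
    have hd : dist x y ≤ dist x x₀ + dist y x₀ := by
      calc dist x y ≤ dist x x₀ + dist x₀ y := dist_triangle _ _ _
        _ = dist x x₀ + dist y x₀ := by rw [dist_comm x₀ y]
    have hr : dist x y ^ p ≤ 2 ^ p * (dist x x₀ ^ p + dist y x₀ ^ p) :=
      aux_rpow_ineq dist_nonneg dist_nonneg dist_nonneg hd hp0.le
    calc c (x, y) ≤ ENNReal.ofReal (2 ^ p * (dist x x₀ ^ p + dist y x₀ ^ p)) :=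
          ENNReal.ofReal_le_ofReal hr
      _ = K * (A x + A y) := by
          rw [ENNReal.ofReal_mul (Real.rpow_nonneg (by norm_num) p),
            ENNReal.ofReal_add (Real.rpow_nonneg dist_nonneg p)
              (Real.rpow_nonneg dist_nonneg p)]
  -- the cost of the coupling
  set IF : ℝ≥0∞ := ∫⁻ x, A x ∂νF with hIFdef
  set IG : ℝ≥0∞ := ∫⁻ x, A x ∂νG with hIGdef
  have hprodB : ∫⁻ z, B z ∂(νF.prod νG) = K * (IF * m + IG * m) := by
    rw [MeasureTheory.lintegral_prod B hBm.aemeasurable]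
    calc ∫⁻ x, ∫⁻ y, B (x, y) ∂νG ∂νF
        = ∫⁻ x, K * (A x * m + IG) ∂νF := by
          refine lintegral_congr fun x => ?_
          simp only [hBdef]
          rw [lintegral_const_mul _ (hAm.const_add _), lintegral_add_left measurable_const,
            lintegral_const, hνGu, hIGdef]
      _ = K * (IF * m + IG * m) := by
          rw [lintegral_const_mul _ ((hAm.mul_const _).add_const _),
            lintegral_add_right _ measurable_const, lintegral_const, hνFu,
            lintegral_mul_const _ hAm, hIFdef]
  have hcost : ∫⁻ z, c z ∂π ≤ K * 2 * M * ε := by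
    rw [hπdef, lintegral_add_measure, lintegral_smul_measure]
    have hdiag0 : ∫⁻ z, c z ∂(Measure.map (fun x => (x, x)) νh) = 0 := by
      have hz : ∀ x : X, c (x, x) = 0 := fun x => by
        simp [hcdef, Real.zero_rpow hp0.ne']
      refine le_antisymm (le_trans (lintegral_map_le c (fun x => (x, x))) ?_) zero_le
      exact le_of_eq ((lintegral_congr hz).trans lintegral_zero)
    rw [hdiag0, zero_add]
    have hinv : m⁻¹ * m ≤ 1 := by
      by_cases h0 : m = 0
      · simp [h0]
      · rw [ENNReal.inv_mul_cancel h0 hm_ne_top]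
    have hcB : (∫⁻ z, c z ∂(νF.prod νG)) ≤ ∫⁻ z, B z ∂(νF.prod νG) := by
      refine lintegral_mono fun z => ?_
      exact hkey z.1 z.2
    calc m⁻¹ * ∫⁻ z, c z ∂(νF.prod νG)
        ≤ m⁻¹ * ∫⁻ z, B z ∂(νF.prod νG) := mul_le_mul_right hcB _
      _ = m⁻¹ * (K * (IF * m + IG * m)) := by rw [hprodB]
      _ = K * (IF + IG) * (m⁻¹ * m) := by ring
      _ ≤ K * (IF + IG) * 1 := mul_le_mul_right hinv _
      _ = K * (IF + IG) := mul_one _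
      _ ≤ K * (ε * M + ε * M) := mul_le_mul_right (add_le_add hIF hIG) _
      _ = K * 2 * M * ε := by ring
  -- conclusion
  have hC_le : C ≤ ENNReal.ofReal (C.toReal + 1) := by
    calc C = ENNReal.ofReal C.toReal := (ENNReal.ofReal_toReal hCne).symm
      _ ≤ ENNReal.ofReal (C.toReal + 1) := ENNReal.ofReal_le_ofReal (by linarith)
  calc wassersteinDist p (μ.withDensity fun x => ENNReal.ofReal (f x))
        (μ.withDensity fun x => ENNReal.ofReal (g x))
      ≤ (∫⁻ z, c z ∂π) ^ (1/p) := by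
        rw [wassersteinDist]
        refine iInf_le_of_le π ?_
        refine iInf_le_of_le hfst ?_
        exact iInf_le _ hsnd
    _ ≤ (K * 2 * M * ε) ^ (1/p) := ENNReal.rpow_le_rpow hcost (by positivity)
    _ = C * ε ^ (1/p) := by
        rw [hCdef, ← ENNReal.mul_rpow_of_nonneg _ _ (by positivity : (0:ℝ) ≤ 1/p)]
    _ ≤ ENNReal.ofReal (C.toReal + 1) * ε ^ (1/p) := mul_le_mul_left hC_le _
end

section
/- Let g(x) = exp(-U(x)) be a probability density on ℝ^d where U is measurable, bounded below on the ball {|x| ≤ R}, and satisfies U(x) ≥ c|x|^p for |x| > R for some constants c > 0, R > 0, p ≥ 1. Then any sequence (m_n) of probability measures on ℝ^d with sup_n H(m_n | g) < ∞ has uniformly bounded p-th moments: sup_n ∫ |x|^p m_n(dx) < ∞. -/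
open MeasureTheory Real
open scoped ENNReal

lemma my_gibbs {α : Type*} [MeasurableSpace α] {μ ν : Measure α}
    [IsProbabilityMeasure μ] [IsProbabilityMeasure ν] (hμν : μ ≪ ν)
    (h_int : Integrable (llr μ ν) μ) : 0 ≤ ∫ x, llr μ ν x ∂μ := by
  have hInt2 : Integrable (fun x => (ν.rnDeriv μ x).toReal) μ :=
    Measure.integrable_toReal_rnDeriv
  have h1 : ∫ x, -llr μ ν x ∂μ ≤ ∫ x, ((ν.rnDeriv μ x).toReal - 1) ∂μ := by
    refine integral_mono_ae h_int.neg (hInt2.sub (integrable_const 1)) ?_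
    filter_upwards [neg_llr hμν, Measure.inv_rnDeriv hμν,
      hμν.ae_le (Measure.rnDeriv_lt_top μ ν), Measure.rnDeriv_pos hμν] with x h1 h2 h3 h4
    have ht : 0 < (ν.rnDeriv μ x).toReal := by
      rw [← h2, Pi.inv_apply, ENNReal.toReal_inv]
      exact inv_pos.2 (ENNReal.toReal_pos h4.ne' h3.ne)
    have : -llr μ ν x = Real.log ((ν.rnDeriv μ x).toReal) := by
      have := h1; simpa [llr] using this
    rw [this]
    linarith [Real.log_le_sub_one_of_pos ht]
  have h2 : ∫ x, ((ν.rnDeriv μ x).toReal - 1) ∂μ ≤ 0 := by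
    rw [integral_sub hInt2 (integrable_const 1)]
    have h3 : ∫ x, (ν.rnDeriv μ x).toReal ∂μ ≤ (ν Set.univ).toReal := by
      have := Measure.setIntegral_toReal_rnDeriv_le (μ := ν) (ν := μ)
        (s := Set.univ) (measure_ne_top ν _)
      simpa using this
    simp only [integral_const, measure_univ, ENNReal.toReal_one, smul_eq_mul, one_mul,
      measure_univ, probReal_univ] at h3 ⊢
    linarith
  rw [integral_neg] at h1
  linarith

lemma my_decay {c p : ℝ} (hc : 0 < c) (hp : 1 ≤ p) (n : ℕ) (hn : 1 ≤ n)
    {t : ℝ} (ht : 0 ≤ t) :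
    exp (-(c / 2 * t ^ p)) ≤
      (exp (c / 2) * (max 1 (2 * n / c)) ^ n) * (1 + t) ^ (-(n : ℝ)) := by
  have hn' : (0:ℝ) < n := by exact_mod_cast hn
  set a : ℝ := c / (2 * n) with ha
  have ha0 : 0 < a := by positivity
  set M : ℝ := max 1 (2 * n / c) with hM
  have hM1 : (1:ℝ) ≤ M := le_max_left _ _
  have hMa : 1 ≤ M * a := by
    have : a⁻¹ ≤ M := by
      rw [hM, ha]
      simp only [inv_div]
      exact le_max_right _ _
    calc (1:ℝ) = a⁻¹ * a := by field_simp
    _ ≤ M * a := by gcongr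
  have h1 : t - 1 ≤ t ^ p := by
    rcases le_or_gt t 1 with h | h
    · have := Real.rpow_nonneg ht p; linarith
    · have h2 : t ^ (1:ℝ) ≤ t ^ p := Real.rpow_le_rpow_of_exponent_le h.le hp
      rw [Real.rpow_one] at h2; linarith
  have hstep1 : exp (-(c / 2 * t ^ p)) ≤ exp (c / 2) * exp (-(c / 2 * t)) := by
    rw [← Real.exp_add]
    apply Real.exp_le_exp.2
    nlinarith [h1]
  have h2 : (1 + t) ≤ M * (1 + a * t) := by nlinarith
  have h3 : (1 + t) ^ n ≤ M ^ n * exp (c / 2 * t) := by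
    calc (1 + t) ^ n ≤ (M * (1 + a * t)) ^ n := by
          apply pow_le_pow_left₀ (by positivity) h2 n
    _ = M ^ n * (1 + a * t) ^ n := mul_pow _ _ _
    _ ≤ M ^ n * exp (a * t) ^ n := by
          refine mul_le_mul_of_nonneg_left (pow_le_pow_left₀ (by positivity) ?_ n) (by positivity)
          have := Real.add_one_le_exp (a * t); linarith
    _ = M ^ n * exp (c / 2 * t) := by
          rw [← Real.exp_nat_mul]
          congr 1
          rw [ha]; field_simp
  have hb : (0:ℝ) < (1 + t) ^ n := by positivity
  rw [Real.rpow_neg (by linarith), Real.rpow_natCast, ← div_eq_mul_inv, le_div_iff₀ hb]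
  calc exp (-(c / 2 * t ^ p)) * (1 + t) ^ n
      ≤ (exp (c / 2) * exp (-(c / 2 * t))) * (M ^ n * exp (c / 2 * t)) := by
        apply mul_le_mul hstep1 h3 (by positivity) (by positivity)
    _ = exp (c / 2) * M ^ n * (exp (-(c / 2 * t)) * exp (c / 2 * t)) := by ring
    _ = exp (c / 2) * M ^ n := by
        rw [← Real.exp_add, neg_add_cancel, Real.exp_zero, mul_one]

/-- Uniform moment bound from bounded relative entropy: let `g(x) = exp (-U x)` be a
probability density with `U` bounded below on `{|x| ≤ R}` and `U(x) ≥ c |x|^p` for `|x| > R`.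
Then any sequence of probability measures `mₙ` with uniformly bounded relative entropy
`H(mₙ | g) = ∫ log (dmₙ/dg) dmₙ ≤ B` has uniformly bounded `p`-th moments. -/
theorem uniform_moment_bound_of_entropy_bound {d : ℕ} (U : (Fin d → ℝ) → ℝ)
    (c R p B b : ℝ) (hc : 0 < c) (hR : 0 < R) (hp : 1 ≤ p)
    (hU : Measurable U)
    (hUnorm : ∫ x, exp (-U x) = 1)
    (hUbelow : ∀ x : Fin d → ℝ, ‖x‖ ≤ R → b ≤ U x)
    (hUgrowth : ∀ x : Fin d → ℝ, R < ‖x‖ → c * ‖x‖ ^ p ≤ U x)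
    (m : ℕ → Measure (Fin d → ℝ)) [∀ n, IsProbabilityMeasure (m n)]
    (habs : ∀ n, m n ≪ volume.withDensity fun x => ENNReal.ofReal (exp (-U x)))
    (hint : ∀ n, Integrable
      (llr (m n) (volume.withDensity fun x => ENNReal.ofReal (exp (-U x)))) (m n))
    (hent : ∀ n, ∫ x, llr (m n) (volume.withDensity fun x => ENNReal.ofReal (exp (-U x))) x
      ∂(m n) ≤ B) :
    ∃ B' : ℝ≥0∞, B' < ⊤ ∧ ∀ n, ∫⁻ x, ENNReal.ofReal (‖x‖ ^ p) ∂(m n) ≤ B' := by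

  set g : Measure (Fin d → ℝ) := volume.withDensity fun x => ENNReal.ofReal (exp (-U x))
    with hgdef
  -- the density is integrable
  have hexpU_int : Integrable (fun x => exp (-U x)) := by
    by_contra h
    rw [integral_undef h] at hUnorm
    norm_num at hUnorm
  haveI hgprob : IsProbabilityMeasure g := by
    constructor
    rw [hgdef, withDensity_apply _ MeasurableSet.univ, Measure.restrict_univ,
      ← ofReal_integral_eq_lintegral_ofReal hexpU_int (Filter.Eventually.of_forall
        fun x => (exp_pos _).le), hUnorm, ENNReal.ofReal_one]
  -- constants
  set n0 : ℕ := d + 1 with hn0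
  set K : ℝ := exp (c / 2) * (max 1 (2 * n0 / c)) ^ n0 with hK
  have hKpos : 0 < K := by positivity
  -- dominating function
  set hb2 : (Fin d → ℝ) → ℝ := fun x =>
    Set.indicator (Metric.closedBall (0 : Fin d → ℝ) R) (fun _ => exp (c / 2 * R ^ p - b)) x
      + K * (1 + ‖x‖) ^ (-(n0 : ℝ)) with hhb2
  have hb2_int : Integrable hb2 := by
    apply Integrable.add
    · rw [integrable_indicator_iff measurableSet_closedBall]
      exact integrableOn_const measure_closedBall_lt_top.ne
    · refine (integrable_one_add_norm ?_).const_mul K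
      rw [hn0]
      simp only [Module.finrank_fintype_fun_eq_card, Fintype.card_fin]
      exact_mod_cast Nat.lt_succ_self d
  set Z : ℝ := ∫ x, hb2 x with hZ
  -- truncated functions
  set F : ℕ → (Fin d → ℝ) → ℝ := fun k x => min (c / 2 * ‖x‖ ^ p) k with hF
  have hF_meas : ∀ k, Measurable (F k) := fun k => by
    rw [hF]; fun_prop
  have hF_nonneg : ∀ k x, 0 ≤ F k x := fun k x =>
    le_min (by positivity) (Nat.cast_nonneg k)
  have hF_le : ∀ k x, F k x ≤ k := fun k x => min_le_right _ _
  -- the key inequality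
  have key : ∀ i k, ∫ x, F k x ∂(m i) ≤ B + Real.log Z := by
    intro i k
    have hF_int_m : Integrable (F k) (m i) := by
      refine (integrable_const (k : ℝ)).mono' (hF_meas k).aestronglyMeasurable ?_
      exact Filter.Eventually.of_forall fun x => by
        rw [Real.norm_eq_abs, abs_of_nonneg (hF_nonneg k x)]; exact hF_le k x
    have hexpF_int_g : Integrable (fun x => exp (F k x)) g := by
      refine (integrable_const (exp (k : ℝ))).mono'
        ((hF_meas k).exp).aestronglyMeasurable ?_
      exact Filter.Eventually.of_forall fun x => by
        rw [Real.norm_eq_abs, abs_of_nonneg (exp_pos _).le]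
        exact Real.exp_le_exp.2 (hF_le k x)
    have habs' : m i ≪ g.tilted (F k) :=
      (habs i).trans (absolutelyContinuous_tilted hexpF_int_g)
    haveI : IsProbabilityMeasure (g.tilted (F k)) :=
      isProbabilityMeasure_tilted hexpF_int_g
    have h_int_tilt : Integrable (llr (m i) (g.tilted (F k))) (m i) :=
      integrable_llr_tilted_right (habs i) hF_int_m (hint i) hexpF_int_g
    have h0 : 0 ≤ ∫ x, llr (m i) (g.tilted (F k)) x ∂(m i) := my_gibbs habs' h_int_tilt
    have heq : ∫ x, llr (m i) (g.tilted (F k)) x ∂(m i)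
        = ∫ x, llr (m i) g x ∂(m i) - ∫ x, F k x ∂(m i)
          + Real.log (∫ x, exp (F k x) ∂g) :=
      integral_llr_tilted_right (habs i) hF_int_m hexpF_int_g (hint i)
    -- bound ∫ exp (F k) ∂g ≤ Z
    have hpoint : ∀ x, exp (-U x) * exp (F k x) ≤ hb2 x := by
      intro x
      rcases le_or_gt ‖x‖ R with h | h
      · have h1 : exp (-U x) * exp (F k x) ≤ exp (c / 2 * R ^ p - b) := by
          rw [← Real.exp_add]
          apply Real.exp_le_exp.2
          have h2 : F k x ≤ c / 2 * R ^ p := by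
            refine (min_le_left _ _).trans ?_
            have : ‖x‖ ^ p ≤ R ^ p :=
              Real.rpow_le_rpow (norm_nonneg x) h (by linarith)
            nlinarith
          have h3 := hUbelow x h
          linarith
        have h4 : hb2 x = exp (c / 2 * R ^ p - b) + K * (1 + ‖x‖) ^ (-(n0 : ℝ)) := by
          show Set.indicator _ _ _ + _ = _
          rw [Set.indicator_of_mem (mem_closedBall_zero_iff.2 h)]
        rw [h4]
        have : 0 ≤ K * (1 + ‖x‖) ^ (-(n0 : ℝ)) := by positivity
        linarith
      · have h4 : hb2 x = K * (1 + ‖x‖) ^ (-(n0 : ℝ)) := by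
          show Set.indicator _ _ _ + _ = _
          rw [Set.indicator_of_notMem
            (fun hx => absurd (mem_closedBall_zero_iff.1 hx) (not_le.2 h)), zero_add]
        rw [h4]
        have h5 : exp (-U x) * exp (F k x) ≤ exp (-(c / 2 * ‖x‖ ^ p)) := by
          rw [← Real.exp_add]
          apply Real.exp_le_exp.2
          have h6 : F k x ≤ c / 2 * ‖x‖ ^ p := min_le_left _ _
          have h7 := hUgrowth x h
          nlinarith
        exact h5.trans (by
          rw [hK]
          exact my_decay hc hp n0 (Nat.le_add_left 1 d) (norm_nonneg x))
    have hg_int_eq : ∫ x, exp (F k x) ∂g = ∫ x, exp (-U x) * exp (F k x) := by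
      rw [hgdef]
      rw [show (fun x : Fin d → ℝ => ENNReal.ofReal (exp (-U x)))
        = fun x => ((fun x => (exp (-U x)).toNNReal) x : ℝ≥0∞) from rfl]
      rw [integral_withDensity_eq_integral_smul (show Measurable (fun x => (exp (-U x)).toNNReal) from hU.neg.exp.real_toNNReal) _]
      congr 1
      funext x
      rw [NNReal.smul_def, Real.coe_toNNReal _ (exp_pos _).le, smul_eq_mul]
    have hZle : ∫ x, exp (F k x) ∂g ≤ Z := by
      rw [hg_int_eq, hZ]
      refine integral_mono ?_ hb2_int hpoint
      refine (hexpU_int.const_mul (exp (k:ℝ))).mono'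
        ((hU.neg.exp.mul (hF_meas k).exp)).aestronglyMeasurable ?_
      refine Filter.Eventually.of_forall fun x => ?_
      rw [Real.norm_eq_abs, abs_of_nonneg (by positivity)]
      have := Real.exp_le_exp.2 (hF_le k x)
      calc exp (-U x) * exp (F k x) ≤ exp (-U x) * exp (k:ℝ) := by nlinarith [exp_pos (-U x)]
        _ = exp (k:ℝ) * exp (-U x) := by ring
    have hZpos : 0 < ∫ x, exp (F k x) ∂g := integral_exp_pos hexpF_int_g
    have hlog : Real.log (∫ x, exp (F k x) ∂g) ≤ Real.log Z :=
      Real.log_le_log hZpos hZle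
    have hB := hent i
    rw [heq] at h0
    linarith
  -- pass to lintegrals
  set B₀ : ℝ := B + Real.log Z with hB₀
  have hlin : ∀ i k, ∫⁻ x, ENNReal.ofReal (F k x) ∂(m i) ≤ ENNReal.ofReal B₀ := by
    intro i k
    have hF_int_m : Integrable (F k) (m i) := by
      refine (integrable_const (k : ℝ)).mono' (hF_meas k).aestronglyMeasurable ?_
      exact Filter.Eventually.of_forall fun x => by
        rw [Real.norm_eq_abs, abs_of_nonneg (hF_nonneg k x)]; exact hF_le k x
    rw [← ofReal_integral_eq_lintegral_ofReal hF_int_m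
      (Filter.Eventually.of_forall fun x => hF_nonneg k x)]
    exact ENNReal.ofReal_le_ofReal (key i k)
  have hsup : ∀ i, ∫⁻ x, ENNReal.ofReal (c / 2 * ‖x‖ ^ p) ∂(m i) ≤ ENNReal.ofReal B₀ := by
    intro i
    have hpt : ∀ x : Fin d → ℝ,
        (⨆ k : ℕ, ENNReal.ofReal (F k x)) = ENNReal.ofReal (c / 2 * ‖x‖ ^ p) := by
      intro x
      apply le_antisymm
      · exact iSup_le fun k => ENNReal.ofReal_le_ofReal (min_le_left _ _)
      · refine le_iSup_of_le ⌈c / 2 * ‖x‖ ^ p⌉₊ (ENNReal.ofReal_le_ofReal ?_)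
        exact le_min le_rfl (Nat.le_ceil _)
      
    calc ∫⁻ x, ENNReal.ofReal (c / 2 * ‖x‖ ^ p) ∂(m i)
        = ∫⁻ x, ⨆ k : ℕ, ENNReal.ofReal (F k x) ∂(m i) := by
          apply lintegral_congr; intro x; rw [hpt]
      _ = ⨆ k : ℕ, ∫⁻ x, ENNReal.ofReal (F k x) ∂(m i) := by
          apply lintegral_iSup (fun k => (hF_meas k).ennreal_ofReal)
          intro k l hkl x
          exact ENNReal.ofReal_le_ofReal (min_le_min le_rfl (by exact_mod_cast hkl))
      _ ≤ ENNReal.ofReal B₀ := iSup_le fun k => hlin i k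
  refine ⟨ENNReal.ofReal (2 / c) * ENNReal.ofReal B₀,
    ENNReal.mul_lt_top ENNReal.ofReal_lt_top ENNReal.ofReal_lt_top, fun i => ?_⟩
  calc ∫⁻ x, ENNReal.ofReal (‖x‖ ^ p) ∂(m i)
      = ∫⁻ x, ENNReal.ofReal (2 / c) * ENNReal.ofReal (c / 2 * ‖x‖ ^ p) ∂(m i) := by
        apply lintegral_congr
        intro x
        rw [← ENNReal.ofReal_mul (by positivity),
          show (2 / c) * (c / 2 * ‖x‖ ^ p) = ‖x‖ ^ p by field_simp]
    _ = ENNReal.ofReal (2 / c) * ∫⁻ x, ENNReal.ofReal (c / 2 * ‖x‖ ^ p) ∂(m i) :=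
        lintegral_const_mul _ (by fun_prop)
    _ ≤ ENNReal.ofReal (2 / c) * ENNReal.ofReal B₀ := mul_le_mul_right (hsup i) _
end
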